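/- Let V and W be quivers. If the free categories Paths V and Paths W are equivalent as categories, then V and W are isomorphic as quivers: there exists a prefunctor from V to W that is bijective on vertices and induces a bijection from the arrows a ⟶ b of V to the arrows φ a ⟶ φ b of W for all vertices a, b. (The free category construction is a monomorphism from directed graphs into categories, bijective on isomorphism classes.) -/

import Mathlib

open CategoryTheory Quiver

section Aux

variable {V : Type*} {W : Type*} [Quiver V] [Quiver W]

lemma stmt5_len_comp {a b c : Paths V} (p : a ⟶ b) (q : b ⟶ c) :
    (p ≫ q).length = p.length + q.length := Quiver.Path.length_comp p q

lemma stmt5_map_len_zero (F : Paths V ⥤ Paths W) {a b : Paths V} (p : a ⟶ b)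
    (h : p.length = 0) : (F.map p).length = 0 := by
  let p' : Quiver.Path (V := V) a b := p
  change p'.length = 0 at h
  change (F.map p').length = 0
  clear_value p'
  cases p' with
  | nil => exact (congrArg (fun q : F.obj a ⟶ F.obj a => Quiver.Path.length q) (F.map_id a)).trans rfl
  | cons q e => simp [Quiver.Path.length] at h

lemma stmt5_unit_len_zero (e : Paths V ≌ Paths W) (a : Paths V) :
    (e.unitIso.hom.app a).length = 0 := by
  have h : (e.unitIso.hom.app a ≫ e.unitIso.inv.app a).length = 0 := by
    rw [e.unitIso.hom_inv_id_app a]; rfl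
  rw [stmt5_len_comp] at h
  omega

lemma stmt5_GF_len (e : Paths V ≌ Paths W) {a b : Paths V} (f : a ⟶ b) :
    (e.inverse.map (e.functor.map f)).length = f.length := by
  have h := e.unitIso.hom.naturality f
  have h' := congrArg Quiver.Path.length h
  simp only [Functor.id_map, Functor.comp_map] at h'
  rw [stmt5_len_comp, stmt5_len_comp, stmt5_unit_len_zero, stmt5_unit_len_zero] at h'
  omega

lemma stmt5_FG_len (e : Paths V ≌ Paths W) {a b : Paths W} (f : a ⟶ b) :
    (e.functor.map (e.inverse.map f)).length = f.length := by
  simpa using stmt5_GF_len e.symm f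

/-- image of a length-one morphism has length one -/
lemma stmt5_map_len_one (e : Paths V ≌ Paths W) {a b : Paths V} (f : a ⟶ b)
    (h : f.length = 1) : (e.functor.map f).length = 1 := by
  have hz : (e.functor.map f).length ≠ 0 := by
    intro h0
    have := stmt5_GF_len e f
    rw [stmt5_map_len_zero e.inverse _ h0] at this
    omega
  by_contra hne
  obtain ⟨k, hk⟩ : ∃ k, (e.functor.map f).length = (k + 1) + 1 := by
    rcases hn : (e.functor.map f).length with _ | _ | k
    · exact absurd hn hz
    · exact absurd hn hne
    · exact ⟨k, rfl⟩
  obtain ⟨c, g, q, hq, hdecomp⟩ :=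
    Quiver.Path.eq_toPath_comp_of_length_eq_succ (e.functor.map f) hk
  have h1 : (e.inverse.map (e.functor.map f)).length = 1 := by
    rw [stmt5_GF_len e f, h]
  have h2 : e.inverse.map (e.functor.map f)
      = e.inverse.map (Hom.toPath g) ≫ e.inverse.map q := by
    rw [hdecomp]; exact e.inverse.map_comp _ _
  rw [h2, stmt5_len_comp] at h1
  have hg' : (e.inverse.map (Hom.toPath g : _ ⟶ _)).length ≠ 0 := by
    intro h0
    have := stmt5_FG_len e (Hom.toPath g : _ ⟶ _)
    rw [stmt5_map_len_zero e.functor _ h0] at this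
    simp [Hom.toPath, Quiver.Path.length] at this
  have hq' : (e.inverse.map q).length ≠ 0 := by
    intro h0
    have := stmt5_FG_len e q
    rw [stmt5_map_len_zero e.functor _ h0] at this
    omega
  omega

lemma stmt5_exists_toPath {a b : V} (p : Quiver.Path a b) (h : p.length = 1) :
    ∃ f : a ⟶ b, p = f.toPath := by
  cases p with
  | nil => simp [Quiver.Path.length] at h
  | cons q g =>
    cases q with
    | nil => exact ⟨g, rfl⟩
    | cons r g' => simp [Quiver.Path.length] at h

lemma stmt5_toPath_inj {a b : V} {f g : a ⟶ b} (h : f.toPath = g.toPath) : f = g := by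
  injection h

lemma stmt5_of_len {a b : V} (f : a ⟶ b) : ((Paths.of V).map f).length = 1 := rfl

end Aux

/-- If the free categories on two quivers are equivalent as categories,
then the quivers are isomorphic: there is a prefunctor that is bijective on vertices and
bijective on each set of arrows. -/
theorem stmt_5 {V : Type*} {W : Type*} [Quiver V] [Quiver W]
    (e : Paths V ≌ Paths W) :
    ∃ φ : V ⥤q W, Function.Bijective φ.obj ∧
      ∀ a b : V, Function.Bijective (fun f : a ⟶ b => φ.map f) := by
  classical
  have hGF : ∀ a : Paths V, e.inverse.obj (e.functor.obj a) = a := fun a =>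
    (Quiver.Path.eq_of_length_zero _ (stmt5_unit_len_zero e a)).symm
  have hFG : ∀ b : Paths W, e.functor.obj (e.inverse.obj b) = b := fun b =>
    (Quiver.Path.eq_of_length_zero _ (stmt5_unit_len_zero e.symm b)).symm
  have key : ∀ {a b : V} (f : a ⟶ b),
      ∃ g : @Quiver.Hom W _ (e.functor.obj ((Paths.of V).obj a)) (e.functor.obj ((Paths.of V).obj b)),
        e.functor.map ((Paths.of V).map f) = g.toPath := by
    intro a b f
    obtain ⟨g, hg⟩ := stmt5_exists_toPath (e.functor.map ((Paths.of V).map f))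
      (stmt5_map_len_one e ((Paths.of V).map f) (stmt5_of_len f))
    exact ⟨g, hg⟩
  refine ⟨⟨fun a => e.functor.obj ((Paths.of V).obj a), fun f => (key f).choose⟩, ?_, ?_⟩
  · constructor
    · intro a b h
      have := congrArg e.inverse.obj h
      rwa [hGF, hGF] at this
    · intro b
      exact ⟨e.inverse.obj b, hFG b⟩
  · intro a b
    constructor
    · intro f g h
      have h2 : e.functor.map ((Paths.of V).map f) = e.functor.map ((Paths.of V).map g) := by
        have h' : (key f).choose = (key g).choose := h
        rw [(key f).choose_spec, (key g).choose_spec, h']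
      have h3 := e.functor.map_injective h2
      simp only [Paths.of_map] at h3
      exact stmt5_toPath_inj h3
    · intro w
      obtain ⟨p, hp⟩ := e.functor.map_surjective
        (X := (Paths.of V).obj a) (Y := (Paths.of V).obj b) (Quiver.Hom.toPath w)
      have hplen : p.length = 1 := by
        have h1 := stmt5_GF_len e p
        rw [hp] at h1
        have h2 := stmt5_map_len_one e.symm (Quiver.Hom.toPath w) rfl
        simp only [Equivalence.symm_functor] at h2
        rw [h2] at h1
        exact h1.symm
      obtain ⟨f, hf⟩ := stmt5_exists_toPath p hplen
      refine ⟨f, ?_⟩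
      have hc := (key f).choose_spec
      have hof : (Paths.of V).map f = p := by rw [hf]; rfl
      have h4 : e.functor.map ((Paths.of V).map f) = Quiver.Hom.toPath w := by rw [hof]; exact hp
      exact stmt5_toPath_inj (hc.symm.trans h4)
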